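/- Let σ be a bicolourable chord diagram on ZMod (2n). Then every chord of σ joins an even element and an odd element of ZMod (2n), and for the alternating framing φ that takes x_∞ to be the even endpoint of each chord x, the intersection form equals the Rosenstiehl form of the interlace graph: for all distinct chords x, y, I_φ(x, y) = E(x, y) + card(N(x) ∩ N(y)) in ZMod 2, where N(x) is the set of chords interlaced with x. -/

import Mathlib

/-- The open cyclic arc `(a, b)` in `ZMod (2n)`: the points `a + s` with `0 < s < t`,
where `t = (b - a).val` is the representative of `b - a` in `[0, 2n)`. -/
def arc (n : ℕ) (a b : ZMod (2 * n)) : Set (ZMod (2 * n)) :=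
  {x | ∃ s : ℕ, 0 < s ∧ s < (b - a).val ∧ x = a + (s : ZMod (2 * n))}

/-- Two chords with endpoints `{x1, x2}` and `{y1, y2}` are interlaced iff exactly
one of `y1`, `y2` lies in the arc `(x1, x2)`. -/
def Interlaced (n : ℕ) (x1 x2 y1 y2 : ZMod (2 * n)) : Prop :=
  Xor' (y1 ∈ arc n x1 x2) (y2 ∈ arc n x1 x2)

/-- The number of chords of `σ` interlaced with the chord `{x, σ x}` (each such
chord has exactly one endpoint in the arc `(x, σ x)`). -/
noncomputable def interNbrCount (n : ℕ) (σ : Equiv.Perm (ZMod (2 * n)))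
    (x : ZMod (2 * n)) : ℕ :=
  ({a : ZMod (2 * n) | a ∈ arc n x (σ x) ∧ σ a ∉ arc n x (σ x)}).ncard

/-- The number of chords of `σ` interlaced with both the chord `{x, σ x}` and the
chord `{y, σ y}` (counted by their unique endpoint in the arc `(x, σ x)`). -/
noncomputable def commonNbrCount (n : ℕ) (σ : Equiv.Perm (ZMod (2 * n)))
    (x y : ZMod (2 * n)) : ℕ :=
  ({a : ZMod (2 * n) | a ∈ arc n x (σ x) ∧ σ a ∉ arc n x (σ x) ∧
      Interlaced n y (σ y) a (σ a)}).ncard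

open scoped Classical in
/-- The `∞`-endpoint of the chord through `i`, for the framing `S`. -/
noncomputable def inftyEnd {n : ℕ} (σ : Equiv.Perm (ZMod (2 * n)))
    (S : Set (ZMod (2 * n))) (i : ZMod (2 * n)) : ZMod (2 * n) :=
  if i ∈ S then i else σ i

open scoped Classical in
/-- The intersection form `I_φ` of the framed chord diagram `σ`, evaluated on the
chords whose `∞`-endpoints are `p` and `q` (so the ordered endpoint pairs are
`(p, σ p)` and `(q, σ q)`): it is `E(x,y)` plus the number of ordered pairs
`(a, σ a)` forming a chord with `a ∈ (p, σ p)` and `σ a ∈ (q, σ q)`, in `ZMod 2`. -/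
noncomputable def interForm (n : ℕ) (σ : Equiv.Perm (ZMod (2 * n)))
    (p q : ZMod (2 * n)) : ZMod 2 :=
  (if Interlaced n p (σ p) q (σ q) then 1 else 0) +
    (({a : ZMod (2 * n) | a ∈ arc n p (σ p) ∧ σ a ∈ arc n q (σ q)}).ncard : ZMod 2)

set_option linter.unusedSectionVars false

section helpers
variable {n : ℕ} [NeZero (2 * n)]

lemma mem_arc {a b x : ZMod (2 * n)} :
    x ∈ arc n a b ↔ 0 < (x - a).val ∧ (x - a).val < (b - a).val := by
  constructor
  · rintro ⟨s, hs0, hst, rfl⟩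
    have hlt : s < 2 * n := lt_trans hst (ZMod.val_lt _)
    rw [add_sub_cancel_left, ZMod.val_cast_of_lt hlt]
    exact ⟨hs0, hst⟩
  · rintro ⟨h1, h2⟩
    refine ⟨(x - a).val, h1, h2, ?_⟩
    rw [ZMod.natCast_val, ZMod.cast_id]
    ring

lemma left_not_mem_arc {a b : ZMod (2 * n)} : a ∉ arc n a b := by
  intro h; rw [mem_arc] at h; simp at h

lemma right_not_mem_arc {a b : ZMod (2 * n)} : b ∉ arc n a b := by
  intro h; rw [mem_arc] at h; omega

lemma val_sub_pos {a b : ZMod (2 * n)} (hab : a ≠ b) : 0 < (b - a).val := by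
  have h : b - a ≠ 0 := sub_ne_zero.mpr (Ne.symm hab)
  have := (ZMod.val_eq_zero (b - a)).not.mpr h
  omega

lemma mem_arc_rev {a b x : ZMod (2 * n)} (hab : a ≠ b) (hxa : x ≠ a) (hxb : x ≠ b) :
    x ∈ arc n b a ↔ x ∉ arc n a b := by
  have hval : (a - b).val = 2 * n - (b - a).val := by
    have h1 : a - b = -(b - a) := by ring
    rw [h1, ZMod.neg_val, if_neg (sub_ne_zero.mpr hab.symm)]
  have hxb' : (x - b).val = ((x - a).val + (2 * n - (b - a).val)) % (2 * n) := by
    have h1 : x - b = (x - a) + (a - b) := by ring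
    rw [h1, ZMod.val_add, hval]
  rw [mem_arc, mem_arc, hxb', hval]
  set s := (x - a).val with hs
  set t := (b - a).val with ht
  have hslt : s < 2 * n := ZMod.val_lt _
  have htlt : t < 2 * n := ZMod.val_lt _
  have hs0 : 0 < s := val_sub_pos hxa.symm
  have ht0 : 0 < t := val_sub_pos hab
  have hst : s ≠ t := by
    intro h
    apply hxb
    have h2 : x - a = b - a := ZMod.val_injective _ h
    exact sub_left_inj.mp h2
  rcases Nat.lt_or_ge s t with h | h
  · have hm : (s + (2 * n - t)) % (2 * n) = s + (2 * n - t) := Nat.mod_eq_of_lt (by omega)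
    rw [hm]; omega
  · have hgt : t < s := by omega
    have hm : (s + (2 * n - t)) % (2 * n) = s - t := by
      have h2 : s + (2 * n - t) = (s - t) + 2 * n := by omega
      rw [h2, Nat.add_mod_right, Nat.mod_eq_of_lt (by omega)]
    rw [hm]; omega

end helpers
section helpers2
variable {n : ℕ} [NeZero (2 * n)]

lemma arc_ncard {a b : ZMod (2 * n)} (hab : a ≠ b) :
    (arc n a b).ncard = (b - a).val - 1 := by
  classical
  have himg : arc n a b =
      ↑((Finset.Ioo 0 ((b - a).val)).image (fun s : ℕ => a + (s : ZMod (2 * n)))) := by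
    ext z
    simp only [arc, Set.mem_setOf_eq, Finset.coe_image, Set.mem_image, Finset.mem_coe,
      Finset.mem_Ioo]
    constructor
    · rintro ⟨s, h1, h2, rfl⟩; exact ⟨s, ⟨h1, h2⟩, rfl⟩
    · rintro ⟨s, ⟨h1, h2⟩, rfl⟩; exact ⟨s, h1, h2, rfl⟩
  have hinj : Set.InjOn (fun s : ℕ => a + (s : ZMod (2 * n))) ↑(Finset.Ioo 0 ((b - a).val)) := by
    intro s1 hs1 s2 hs2 he
    simp only [Finset.coe_Ioo, Set.mem_Ioo] at hs1 hs2
    have h1 : s1 < 2 * n := lt_trans hs1.2 (ZMod.val_lt _)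
    have h2 : s2 < 2 * n := lt_trans hs2.2 (ZMod.val_lt _)
    have hc : ((s1 : ℕ) : ZMod (2 * n)) = ((s2 : ℕ) : ZMod (2 * n)) := add_left_cancel he
    have := congrArg ZMod.val hc
    rwa [ZMod.val_cast_of_lt h1, ZMod.val_cast_of_lt h2] at this
  rw [himg, Set.ncard_coe_finset, Finset.card_image_of_injOn hinj, Nat.card_Ioo]
  omega

lemma even_ncard_of_invol {α : Type*} [Fintype α] (S : Set α) (f : α → α)
    (h1 : ∀ a ∈ S, f a ∈ S) (h2 : ∀ a ∈ S, f (f a) = a) (h3 : ∀ a ∈ S, f a ≠ a) :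
    Even S.ncard := by
  classical
  rw [Set.ncard_eq_toFinset_card']
  rw [Nat.even_iff, ← Nat.dvd_iff_mod_eq_zero, ← ZMod.natCast_eq_zero_iff]
  rw [Finset.card_eq_sum_ones, Nat.cast_sum]
  refine Finset.sum_involution (fun a _ => f a) (fun a ha => by decide)
    (fun a ha _ => h3 a (Set.mem_toFinset.mp ha)) (fun a ha => ?_) (fun a ha => ?_)
  · rw [Set.mem_toFinset] at ha ⊢; exact h1 a ha
  · exact h2 a (Set.mem_toFinset.mp ha)

end helpers2
section helpers3
variable {n : ℕ} [NeZero (2 * n)]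

lemma val_add_parity (a b : ZMod (2 * n)) : (a + b).val % 2 = (a.val + b.val) % 2 := by
  rw [ZMod.val_add]
  exact Nat.mod_mod_of_dvd _ ⟨n, rfl⟩

lemma val_neg_parity (a : ZMod (2 * n)) : (-a).val % 2 = a.val % 2 := by
  rw [ZMod.neg_val]
  by_cases h : a = 0
  · simp [h]
  · rw [if_neg h]
    have := ZMod.val_lt a
    omega

lemma val_sub_parity (a b : ZMod (2 * n)) : (a - b).val % 2 = (a.val + b.val) % 2 := by
  rw [sub_eq_add_neg, val_add_parity]
  have := val_neg_parity b
  omega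

lemma odd_gap (σ : Equiv.Perm (ZMod (2 * n)))
    (hinv : ∀ i, σ (σ i) = i) (hfix : ∀ i, σ i ≠ i)
    (hbic : ∀ x : ZMod (2 * n), Even (interNbrCount n σ x)) (z : ZMod (2 * n)) :
    ¬ Even ((σ z - z).val) := by
  have hab : z ≠ σ z := Ne.symm (hfix z)
  have harc : (arc n z (σ z)).ncard = (σ z - z).val - 1 := arc_ncard hab
  have hsplit : arc n z (σ z) =
      {a | a ∈ arc n z (σ z) ∧ σ a ∈ arc n z (σ z)} ∪
      {a | a ∈ arc n z (σ z) ∧ σ a ∉ arc n z (σ z)} := by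
    ext a
    by_cases h : σ a ∈ arc n z (σ z) <;> simp [h] <;> tauto
  have hdisj : Disjoint {a | a ∈ arc n z (σ z) ∧ σ a ∈ arc n z (σ z)}
      {a | a ∈ arc n z (σ z) ∧ σ a ∉ arc n z (σ z)} := by
    rw [Set.disjoint_left]
    rintro a ⟨_, h2⟩ ⟨_, h4⟩
    exact h4 h2
  have hP : Even ({a | a ∈ arc n z (σ z) ∧ σ a ∈ arc n z (σ z)}).ncard := by
    refine even_ncard_of_invol _ σ ?_ ?_ ?_
    · rintro a ⟨h1, h2⟩; exact ⟨h2, by rw [hinv]; exact h1⟩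
    · intro a _; exact hinv a
    · intro a _; exact hfix a
  have hQ : Even ({a | a ∈ arc n z (σ z) ∧ σ a ∉ arc n z (σ z)}).ncard := hbic z
  have hcard : (arc n z (σ z)).ncard =
      ({a | a ∈ arc n z (σ z) ∧ σ a ∈ arc n z (σ z)}).ncard +
      ({a | a ∈ arc n z (σ z) ∧ σ a ∉ arc n z (σ z)}).ncard := by
    conv_lhs => rw [hsplit]
    exact Set.ncard_union_eq hdisj (Set.toFinite _) (Set.toFinite _)
  have ht0 : 0 < (σ z - z).val := val_sub_pos hab
  rw [Nat.even_iff] at hP hQ ⊢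
  omega

lemma parity_ne (σ : Equiv.Perm (ZMod (2 * n)))
    (hinv : ∀ i, σ (σ i) = i) (hfix : ∀ i, σ i ≠ i)
    (hbic : ∀ x : ZMod (2 * n), Even (interNbrCount n σ x)) (i : ZMod (2 * n)) :
    Even i.val ↔ ¬ Even ((σ i).val) := by
  have h1 := odd_gap σ hinv hfix hbic i
  have h2 := val_sub_parity (σ i) i
  rw [Nat.even_iff] at h1 ⊢
  rw [Nat.even_iff]
  omega

lemma interlaced_flip {a b c d : ZMod (2 * n)} (hab : a ≠ b) (hca : c ≠ a) (hcb : c ≠ b)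
    (hda : d ≠ a) (hdb : d ≠ b) : Interlaced n b a c d ↔ Interlaced n a b c d := by
  unfold Interlaced
  rw [mem_arc_rev hab hca hcb, mem_arc_rev hab hda hdb]
  unfold Xor' Xor
  tauto

lemma interlaced_swap {a b c d : ZMod (2 * n)} :
    Interlaced n a b c d ↔ Interlaced n a b d c := by
  unfold Interlaced Xor' Xor
  tauto

lemma xor_mem_arc_swap {u v z w : ZMod (2 * n)} (huv : u ≠ v)
    (hzw : (z = u ∨ z = v) ↔ (w = u ∨ w = v)) :
    (Xor' (z ∈ arc n u v) (w ∈ arc n u v)) ↔ (Xor' (z ∈ arc n v u) (w ∈ arc n v u)) := by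
  by_cases hz : z = u ∨ z = v
  · have hw := hzw.mp hz
    have nz1 : z ∉ arc n u v := by
      rcases hz with rfl | rfl
      exacts [left_not_mem_arc, right_not_mem_arc]
    have nz2 : z ∉ arc n v u := by
      rcases hz with rfl | rfl
      exacts [right_not_mem_arc, left_not_mem_arc]
    have nw1 : w ∉ arc n u v := by
      rcases hw with rfl | rfl
      exacts [left_not_mem_arc, right_not_mem_arc]
    have nw2 : w ∉ arc n v u := by
      rcases hw with rfl | rfl
      exacts [right_not_mem_arc, left_not_mem_arc]
    simp [Xor', nz1, nz2, nw1, nw2]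
  · have hw : ¬ (w = u ∨ w = v) := fun h => hz (hzw.mpr h)
    push_neg at hz hw
    rw [mem_arc_rev huv hz.1 hz.2, mem_arc_rev huv hw.1 hw.2]
    unfold Xor' Xor
    tauto

end helpers3
section helpers4
variable {n : ℕ} [NeZero (2 * n)]

lemma val_one' (hn : 1 ≤ n) : (1 : ZMod (2 * n)).val = 1 := by
  have h : ((1 : ℕ) : ZMod (2 * n)).val = 1 := ZMod.val_cast_of_lt (by omega)
  simpa using h

lemma arc_succ (hn : 1 ≤ n) {p p' z : ZMod (2 * n)} (hpe : Even p.val)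
    (ht : ¬ Even ((p' - p).val)) (hz : z ∈ arc n p p') (hzo : ¬ Even z.val) :
    z + 1 ∈ arc n p p' := by
  rw [mem_arc] at hz ⊢
  have hpar : (z - p).val % 2 = (z.val + p.val) % 2 := val_sub_parity z p
  have hkey : z + 1 - p = (z - p) + 1 := by ring
  have hval : (z + 1 - p).val = ((z - p).val + 1) % (2 * n) := by
    rw [hkey, ZMod.val_add, val_one' hn]
  have htlt : (p' - p).val < 2 * n := ZMod.val_lt _
  rw [Nat.even_iff] at hpe hzo ht
  have hne : (z - p).val + 1 < (p' - p).val := by omega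
  rw [hval, Nat.mod_eq_of_lt (by omega)]
  omega

lemma arc_pred (hn : 1 ≤ n) {p p' z : ZMod (2 * n)} (hpe : Even p.val)
    (ht : ¬ Even ((p' - p).val)) (hz : z ∈ arc n p p') (hzo : Even z.val) :
    z - 1 ∈ arc n p p' := by
  rw [mem_arc] at hz ⊢
  have hpar : (z - p).val % 2 = (z.val + p.val) % 2 := val_sub_parity z p
  have hone : ((-1 : ZMod (2 * n))).val = 2 * n - 1 := by
    haveI : Fact (1 < 2 * n) := ⟨by omega⟩
    rw [show (-1 : ZMod (2 * n)) = -(1 : ZMod (2 * n)) by ring, ZMod.neg_val,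
      if_neg one_ne_zero, val_one' hn]
  have hkey : z - 1 - p = (z - p) + (-1) := by ring
  have hval : (z - 1 - p).val = ((z - p).val + (2 * n - 1)) % (2 * n) := by
    rw [hkey, ZMod.val_add, hone]
  rw [Nat.even_iff] at hpe hzo ht
  have hs2 : 2 ≤ (z - p).val := by omega
  have hm : ((z - p).val + (2 * n - 1)) % (2 * n) = (z - p).val - 1 := by
    have h2 : (z - p).val + (2 * n - 1) = ((z - p).val - 1) + 2 * n := by omega
    rw [h2, Nat.add_mod_right, Nat.mod_eq_of_lt (by have := ZMod.val_lt (z - p); omega)]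
  rw [hval, hm]
  omega

lemma val_succ_parity (hn : 1 ≤ n) (z : ZMod (2 * n)) :
    (z + 1).val % 2 = (z.val + 1) % 2 := by
  have := val_add_parity z 1
  rw [val_one' hn] at this
  exact this

lemma val_pred_parity (hn : 1 ≤ n) (z : ZMod (2 * n)) :
    (z - 1).val % 2 = (z.val + 1) % 2 := by
  have := val_sub_parity z 1
  rw [val_one' hn] at this
  exact this

lemma even_ncard_inter (hn : 1 ≤ n) {p q p' q' : ZMod (2 * n)}
    (hpe : Even p.val) (hqe : Even q.val)
    (ht : ¬ Even ((p' - p).val)) (ht' : ¬ Even ((q' - q).val)) :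
    Even ({a : ZMod (2 * n) | a ∈ arc n p p' ∧ a ∈ arc n q q'}).ncard := by
  classical
  haveI : Fact (1 < 2 * n) := ⟨by omega⟩
  refine even_ncard_of_invol _ (fun z => if Even z.val then z - 1 else z + 1) ?_ ?_ ?_
  · rintro a ⟨h1, h2⟩
    by_cases he : Even a.val
    · rw [if_pos he]
      exact ⟨arc_pred hn hpe ht h1 he, arc_pred hn hqe ht' h2 he⟩
    · rw [if_neg he]
      exact ⟨arc_succ hn hpe ht h1 he, arc_succ hn hqe ht' h2 he⟩
  · intro a _
    by_cases he : Even a.val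
    · rw [if_pos he]
      have hp : ¬ Even (a - 1).val := by
        have := val_pred_parity hn a
        rw [Nat.even_iff] at he ⊢
        omega
      rw [if_neg hp]
      ring
    · rw [if_neg he]
      have hp : Even (a + 1).val := by
        have := val_succ_parity hn a
        rw [Nat.even_iff] at he ⊢
        omega
      rw [if_pos hp]
      ring
  · intro a _
    by_cases he : Even a.val
    · rw [if_pos he]
      intro h
      exact one_ne_zero (by linear_combination -h)
    · rw [if_neg he]
      intro h
      exact one_ne_zero (by linear_combination h)

open scoped Classical in
lemma ncard_cast_sum (S : Set (ZMod (2 * n))) :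
    ((S.ncard : ZMod 2)) = ∑ a : ZMod (2 * n), (if a ∈ S then (1 : ZMod 2) else 0) := by
  have hT : S.toFinset = Finset.univ.filter (fun a => a ∈ S) := by ext a; simp
  rw [Set.ncard_eq_toFinset_card', hT, Finset.card_filter, Nat.cast_sum]
  exact Finset.sum_congr rfl (fun a _ => by split <;> simp)

end helpers4
open scoped Classical in
lemma key_abstract (P1 P2 Q1 Q2 R1 R2 T : Prop)
    (h1 : Xor' R1 R2 ↔ Xor' P1 P2) (h2 : T ↔ Xor' Q1 Q2) :
    ((if P1 ∧ Q2 then (1 : ZMod 2) else 0) + (if P1 ∧ Q1 then (1 : ZMod 2) else 0) +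
      (if R1 ∧ ¬R2 ∧ T then (1 : ZMod 2) else 0)) +
    ((if P2 ∧ Q1 then (1 : ZMod 2) else 0) + (if P2 ∧ Q2 then (1 : ZMod 2) else 0) +
      (if R2 ∧ ¬R1 ∧ T then (1 : ZMod 2) else 0)) = 0 := by
  by_cases p1 : P1 <;> by_cases p2 : P2 <;> by_cases q1 : Q1 <;> by_cases q2 : Q2 <;>
    by_cases r1 : R1 <;> by_cases r2 : R2 <;> by_cases t : T <;>
    simp only [Xor', p1, p2, q1, q2, r1, r2, t, iff_true, iff_false, true_and, false_and,
      and_true, and_false, not_true, not_false_iff, if_true, if_false, true_iff, false_iff,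
      not_and, not_not, not_false_eq_true, not_true_eq_false, and_self, if_pos, if_neg] at h1 h2 ⊢ <;>
    first | decide | tauto | (exfalso; tauto)

open scoped Classical in
/-- For a bicolourable chord diagram `σ` on `ZMod (2n)`: every chord joins an even
and an odd element, and, for the alternating framing whose `∞`-endpoints are the
even elements, the intersection form equals the Rosenstiehl form
`E(x,y) + card (N(x) ∩ N(y))` of the interlace graph. -/
theorem stmt18 (n : ℕ) (hn : 1 ≤ n) (σ : Equiv.Perm (ZMod (2 * n)))
    (hinv : ∀ i, σ (σ i) = i) (hfix : ∀ i, σ i ≠ i)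
    (hbic : ∀ x : ZMod (2 * n), Even (interNbrCount n σ x)) :
    (∀ i : ZMod (2 * n), Even i.val ↔ ¬ Even ((σ i).val)) ∧
    (∀ x y : ZMod (2 * n), y ≠ x → y ≠ σ x →
      interForm n σ (inftyEnd σ {i : ZMod (2 * n) | Even i.val} x)
          (inftyEnd σ {i : ZMod (2 * n) | Even i.val} y) =
        (if Interlaced n x (σ x) y (σ y) then 1 else 0) +
          (commonNbrCount n σ x y : ZMod 2)) := by
  haveI : NeZero (2 * n) := ⟨by omega⟩
  have part1 := parity_ne σ hinv hfix hbic
  have hodd := odd_gap σ hinv hfix hbic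
  refine ⟨part1, ?_⟩
  intro x y hyx hysx
  have hxx : σ x ≠ x := hfix x
  have hyy : σ y ≠ y := hfix y
  have hsyx : σ y ≠ x := fun h => hysx (by rw [← h, hinv])
  have hsysx : σ y ≠ σ x := fun h => hyx (σ.injective h)
  set p := inftyEnd σ {i : ZMod (2 * n) | Even i.val} x with hp
  set q := inftyEnd σ {i : ZMod (2 * n) | Even i.val} y with hq
  have hpx : (p = x ∧ σ p = σ x ∧ Even x.val) ∨ (p = σ x ∧ σ p = x ∧ ¬ Even x.val) := by
    by_cases hz : Even x.val
    · left
      have h1 : p = x := by rw [hp]; simp [inftyEnd, hz]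
      exact ⟨h1, by rw [h1], hz⟩
    · right
      have h1 : p = σ x := by rw [hp]; simp [inftyEnd, hz]
      exact ⟨h1, by rw [h1, hinv], hz⟩
  have hqy : (q = y ∧ σ q = σ y ∧ Even y.val) ∨ (q = σ y ∧ σ q = y ∧ ¬ Even y.val) := by
    by_cases hz : Even y.val
    · left
      have h1 : q = y := by rw [hq]; simp [inftyEnd, hz]
      exact ⟨h1, by rw [h1], hz⟩
    · right
      have h1 : q = σ y := by rw [hq]; simp [inftyEnd, hz]
      exact ⟨h1, by rw [h1, hinv], hz⟩
  have hpe : Even p.val := by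
    rcases hpx with ⟨h1, _, h3⟩ | ⟨h1, _, h3⟩
    · rw [h1]; exact h3
    · rw [h1]; by_contra h; exact h3 ((part1 x).mpr h)
  have hqe : Even q.val := by
    rcases hqy with ⟨h1, _, h3⟩ | ⟨h1, _, h3⟩
    · rw [h1]; exact h3
    · rw [h1]; by_contra h; exact h3 ((part1 y).mpr h)
  -- the four distinctness facts for q, σ q versus x, σ x
  have hqne : q ≠ x ∧ q ≠ σ x ∧ σ q ≠ x ∧ σ q ≠ σ x := by
    rcases hqy with ⟨h1, h2, _⟩ | ⟨h1, h2, _⟩ <;> rw [h2, h1] <;>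
      exact ⟨by assumption, by assumption, by assumption, by assumption⟩
  -- interlacedness transfer
  have hE : Interlaced n p (σ p) q (σ q) ↔ Interlaced n x (σ x) y (σ y) := by
    have step1 : Interlaced n p (σ p) q (σ q) ↔ Interlaced n x (σ x) q (σ q) := by
      rcases hpx with ⟨h1, h2, _⟩ | ⟨h1, h2, _⟩
      · rw [h2, h1]
      · rw [h2, h1]
        exact interlaced_flip hxx.symm hqne.1 hqne.2.1 hqne.2.2.1 hqne.2.2.2
    rw [step1]
    rcases hqy with ⟨h1, h2, _⟩ | ⟨h1, h2, _⟩
    · rw [h2, h1]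
    · rw [h2, h1]
      exact interlaced_swap.symm
  set A := arc n p (σ p) with hA
  set B := arc n q (σ q) with hB
  set C := arc n x (σ x) with hC
  have hXA : ∀ a, Xor' (a ∈ C) (σ a ∈ C) ↔ Xor' (a ∈ A) (σ a ∈ A) := by
    intro a
    rcases hpx with ⟨h1, h2, _⟩ | ⟨h1, h2, _⟩
    · rw [hA, hC, h2, h1]
    · rw [hA, hC, h2, h1]
      refine xor_mem_arc_swap hxx.symm ?_
      constructor
      · rintro (rfl | rfl)
        · right; rfl
        · left; exact hinv x
      · rintro (h | h)
        · right; exact σ.injective (h.trans (hinv x).symm)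
        · left; exact σ.injective h
  have hXB : ∀ a, Interlaced n y (σ y) a (σ a) ↔ Xor' (a ∈ B) (σ a ∈ B) := by
    intro a
    unfold Interlaced
    rcases hqy with ⟨h1, h2, _⟩ | ⟨h1, h2, _⟩
    · rw [hB, h2, h1]
    · rw [hB, h2, h1]
      refine xor_mem_arc_swap hyy.symm ?_
      constructor
      · rintro (rfl | rfl)
        · right; rfl
        · left; exact hinv y
      · rintro (h | h)
        · right; exact σ.injective (h.trans (hinv y).symm)
        · left; exact σ.injective h
  -- the master function
  set F : ZMod (2 * n) → ZMod 2 := fun a =>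
    (if a ∈ A ∧ σ a ∈ B then (1 : ZMod 2) else 0) +
    (if a ∈ A ∧ a ∈ B then (1 : ZMod 2) else 0) +
    (if a ∈ C ∧ ¬ (σ a ∈ C) ∧ Interlaced n y (σ y) a (σ a) then (1 : ZMod 2) else 0) with hF
  have key : ∀ a, F a + F (σ a) = 0 := by
    intro a
    have e0 : σ (σ a) = a := hinv a
    have eF : F (σ a) =
        (if σ a ∈ A ∧ a ∈ B then (1 : ZMod 2) else 0) +
        (if σ a ∈ A ∧ σ a ∈ B then (1 : ZMod 2) else 0) +
        (if σ a ∈ C ∧ ¬ (a ∈ C) ∧ Interlaced n y (σ y) a (σ a) then (1 : ZMod 2) else 0) := by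
      rw [hF]
      dsimp only
      rw [e0, show Interlaced n y (σ y) (σ a) a = Interlaced n y (σ y) a (σ a) from
        propext interlaced_swap]
    rw [eF, hF]
    dsimp only
    exact key_abstract (a ∈ A) (σ a ∈ A) (a ∈ B) (σ a ∈ B) (a ∈ C) (σ a ∈ C)
      (Interlaced n y (σ y) a (σ a)) (hXA a) (hXB a)
  have hsum : ∑ a : ZMod (2 * n), F a = 0 :=
    Finset.sum_ninvolution σ key (fun a _ => hfix a) (fun a => Finset.mem_univ _) hinv
  have h0 : (({a : ZMod (2 * n) | a ∈ A ∧ σ a ∈ B}).ncard : ZMod 2) +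
      (({a : ZMod (2 * n) | a ∈ A ∧ a ∈ B}).ncard : ZMod 2) +
      (({a : ZMod (2 * n) | a ∈ C ∧ ¬ (σ a ∈ C) ∧ Interlaced n y (σ y) a (σ a)}).ncard : ZMod 2)
      = 0 := by
    rw [ncard_cast_sum, ncard_cast_sum, ncard_cast_sum, ← Finset.sum_add_distrib,
      ← Finset.sum_add_distrib]
    refine Eq.trans ?_ hsum
    apply Finset.sum_congr rfl
    intro a _
    rw [hF]
    simp only [Set.mem_setOf_eq]
  have hAB0 : (({a : ZMod (2 * n) | a ∈ A ∧ a ∈ B}).ncard : ZMod 2) = 0 := by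
    obtain ⟨m, hm⟩ := even_ncard_inter hn hpe hqe (hodd p) (hodd q)
    rw [hA, hB, hm, Nat.cast_add, CharTwo.add_self_eq_zero]
  have hST : (({a : ZMod (2 * n) | a ∈ A ∧ σ a ∈ B}).ncard : ZMod 2) =
      (({a : ZMod (2 * n) | a ∈ C ∧ ¬ (σ a ∈ C) ∧ Interlaced n y (σ y) a (σ a)}).ncard : ZMod 2) := by
    have hsum2 : (({a : ZMod (2 * n) | a ∈ A ∧ σ a ∈ B}).ncard : ZMod 2) +
        (({a : ZMod (2 * n) | a ∈ C ∧ ¬ (σ a ∈ C) ∧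
          Interlaced n y (σ y) a (σ a)}).ncard : ZMod 2) = 0 := by
      linear_combination h0 - hAB0
    have h2 : ∀ u v : ZMod 2, u + v = 0 → u = v := by decide
    exact h2 _ _ hsum2
  unfold interForm commonNbrCount
  rw [if_congr hE rfl rfl]
  exact congrArg (fun z : ZMod 2 =>
    (if Interlaced n x (σ x) y (σ y) then (1 : ZMod 2) else 0) + z) hST
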